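/- Let $K \subset F$ be a finite simple field extension with $[F:K] = n$ and $K$ infinite, and let $\mathcal{F}$ be the collection of all proper intermediate fields of $K \subset F$ (regarded as $K$-subspaces of $F$). If $T$ is a $K$-subspace of $F$ maximal (with respect to inclusion) among subspaces satisfying $T \cap M = 0$ for every $M \in \mathcal{F}$, then $\dim_K T = n - \psi(F,K)$, and moreover $T$ is a primitive $K$-subspace of $F$ of maximal dimension, so $\dim_K T = \phi(F,K)$. -/

import Mathlib

/-- Over an infinite field, a vector space is not the union of finitely many
proper subspaces: there is a vector avoiding all of them. -/
lemma avoid_finset_submodules {K V : Type*} [Field K] [Infinite K]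
    [AddCommGroup V] [Module K V] (s : Finset (Submodule K V))
    (hs : ∀ p ∈ s, p ≠ ⊤) : ∃ x : V, ∀ p ∈ s, x ∉ p := by
  classical
  induction s using Finset.induction with
  | empty => exact ⟨0, by simp⟩
  | @insert a s ha ih =>
    obtain ⟨y, hy⟩ := ih fun p hp => hs p (Finset.mem_insert_of_mem hp)
    obtain ⟨x, hx⟩ : ∃ x, x ∉ a := by
      by_contra h
      push_neg at h
      exact hs a (Finset.mem_insert_self a s) (Submodule.eq_top_iff'.2 h)
    set bad : Set K := ⋃ p ∈ (insert a s : Finset (Submodule K V)),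
      {c : K | y + c • x ∈ p} with hbad
    have hsub : ∀ p ∈ (insert a s : Finset (Submodule K V)),
        ({c : K | y + c • x ∈ p} : Set K).Subsingleton := by
      intro p hp c hc c' hc'
      by_contra hcc
      have hd : (c - c') • x ∈ p := by
        have : (y + c • x) - (y + c' • x) ∈ p := p.sub_mem hc hc'
        simpa [sub_smul] using this
      have hxp : x ∈ p := by
        have := p.smul_mem (c - c')⁻¹ hd
        rwa [inv_smul_smul₀ (sub_ne_zero.2 hcc)] at this
      have hyp : y ∈ p := by
        have : (y + c • x) - c • x ∈ p := p.sub_mem hc (p.smul_mem c hxp)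
        simpa using this
      rcases Finset.mem_insert.1 hp with rfl | hp'
      · exact hx hxp
      · exact hy p hp' hyp
    have hfin : bad.Finite :=
      Set.Finite.biUnion (insert a s).finite_toSet
        (fun p hp => Set.Subsingleton.finite (hsub p hp))
    obtain ⟨c, hc⟩ := hfin.infinite_compl.nonempty
    refine ⟨y + c • x, fun p hp hmem => ?_⟩
    exact hc (Set.mem_biUnion hp hmem)

/-- Let `K ⊂ F` be a finite simple field extension of degree `n` with `K`
infinite and let `𝓕` be the collection of all proper intermediate fields,
regarded as `K`-subspaces of `F`. If `T` is a `K`-subspace of `F` maximal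
(w.r.t. inclusion) among subspaces meeting every proper intermediate field
trivially, then `dim_K T = n - ψ(F,K)`, `T` is a primitive `K`-subspace, and
`dim_K T = φ(F,K)`. -/
theorem stmt10 (K F : Type*) [Field K] [Field F] [Algebra K F] [Infinite K]
    [FiniteDimensional K F] (n : ℕ) (hn : Module.finrank K F = n)
    (hsimple : ∃ α : F, IntermediateField.adjoin K {α} = ⊤)
    (ψ φ : ℕ)
    (hψ : IsGreatest
      {d : ℕ | ∃ M : IntermediateField K F, M ≠ ⊤ ∧ Module.finrank K M = d} ψ)
    (hφ : IsGreatest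
      {d : ℕ | ∃ V : Submodule K F,
        (∀ a ∈ V, a ≠ 0 → IntermediateField.adjoin K {a} = ⊤) ∧
        Module.finrank K V = d} φ)
    (T : Submodule K F)
    (hT : ∀ M : IntermediateField K F, M ≠ ⊤ → ∀ x ∈ T, x ∈ M → x = 0)
    (hTmax : ∀ T' : Submodule K F,
      (∀ M : IntermediateField K F, M ≠ ⊤ → ∀ x ∈ T', x ∈ M → x = 0) →
      T ≤ T' → T' = T) :
    Module.finrank K T = n - ψ ∧
      (∀ a ∈ T, a ≠ 0 → IntermediateField.adjoin K {a} = ⊤) ∧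
      Module.finrank K T = φ := by
  classical
  -- primitivity of T
  have hprim : ∀ a ∈ T, a ≠ 0 → IntermediateField.adjoin K {a} = ⊤ := by
    intro a haT ha0
    by_contra h
    exact ha0 (hT _ h a haT (IntermediateField.mem_adjoin_simple_self K a))
  -- pick a proper intermediate field of dimension ψ
  obtain ⟨M₀, hM₀ne, hM₀dim⟩ := hψ.1
  -- dimension counting: for any proper M, T ⊓ M = ⊥
  have hdisj : ∀ M : IntermediateField K F, M ≠ ⊤ →
      T ⊓ (Subalgebra.toSubmodule M.toSubalgebra) = ⊥ := by
    intro M hM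
    rw [eq_bot_iff]
    intro x hx
    have := hT M hM x hx.1 hx.2
    simpa [this] using Submodule.zero_mem _
  have hMdim : ∀ M : IntermediateField K F,
      Module.finrank K (Subalgebra.toSubmodule M.toSubalgebra) = Module.finrank K M := fun _ => rfl
  -- upper bound: finrank T + ψ ≤ n
  have hub : Module.finrank K T + ψ ≤ n := by
    have := Submodule.finrank_sup_add_finrank_inf_eq T
      (Subalgebra.toSubmodule M₀.toSubalgebra)
    rw [hdisj M₀ hM₀ne, finrank_bot, add_zero, hMdim, hM₀dim] at this
    calc Module.finrank K T + ψ
        = Module.finrank K ↥(T ⊔ Subalgebra.toSubmodule M₀.toSubalgebra) := this.symm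
      _ ≤ Module.finrank K F := Submodule.finrank_le _
      _ = n := hn
  -- ψ < n
  have hψlt : ψ < n := by
    have : M₀.toSubalgebra.toSubmodule < ⊤ := by
      rcases lt_or_eq_of_le (le_top (a := M₀.toSubalgebra.toSubmodule)) with h | h
      · exact h
      · exfalso
        apply hM₀ne
        ext x
        simp only [IntermediateField.mem_top, iff_true]
        have : x ∈ M₀.toSubalgebra.toSubmodule := h ▸ Submodule.mem_top
        exact this
    have := Submodule.finrank_lt (K := K) (V := F) this.ne
    rw [hMdim, hM₀dim, hn] at this
    exact this
  -- lower bound: finrank T ≥ n - ψ, i.e. finrank T + ψ ≥ n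
  have hlb : n ≤ Module.finrank K T + ψ := by
    by_contra hlt
    push_neg at hlt
    -- the union of the T ⊔ M over proper M does not cover F
    have : Algebra.IsAlgebraic K F := Algebra.IsAlgebraic.of_finite K F
    have hfinIF : Finite (IntermediateField K F) :=
      Field.finite_intermediateField_of_exists_primitive_element K F hsimple
    have : Fintype (IntermediateField K F) := Fintype.ofFinite _
    set s : Finset (Submodule K F) :=
      (Finset.univ.filter (fun M : IntermediateField K F => M ≠ ⊤)).image
        (fun M => T ⊔ Subalgebra.toSubmodule M.toSubalgebra) with hs
    have hsne : ∀ p ∈ s, p ≠ ⊤ := by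
      intro p hp
      simp only [hs, Finset.mem_image, Finset.mem_filter, Finset.mem_univ, true_and] at hp
      obtain ⟨M, hM, rfl⟩ := hp
      intro htop
      have hfr := Submodule.finrank_sup_add_finrank_inf_eq T
        (Subalgebra.toSubmodule M.toSubalgebra)
      rw [hdisj M hM, finrank_bot, add_zero, htop, finrank_top, hn, hMdim] at hfr
      have hMle : Module.finrank K M ≤ ψ := hψ.2 ⟨M, hM, rfl⟩
      omega
    obtain ⟨x, hx⟩ := avoid_finset_submodules s hsne
    have hxs : ∀ M : IntermediateField K F, M ≠ ⊤ →
        x ∉ T ⊔ Subalgebra.toSubmodule M.toSubalgebra := by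
      intro M hM
      apply hx
      simp only [hs, Finset.mem_image, Finset.mem_filter, Finset.mem_univ, true_and]
      exact ⟨M, hM, rfl⟩
    have hxT : x ∉ T := fun h => hxs M₀ hM₀ne (Submodule.mem_sup_left h)
    -- T' = T ⊔ span {x} still meets every proper intermediate field trivially
    set T' : Submodule K F := T ⊔ Submodule.span K {x} with hT'
    have hT'prop : ∀ M : IntermediateField K F, M ≠ ⊤ → ∀ z ∈ T', z ∈ M → z = 0 := by
      intro M hM z hz hzM
      rw [hT', Submodule.mem_sup] at hz
      obtain ⟨t, ht, w, hw, rfl⟩ := hz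
      obtain ⟨c, rfl⟩ := Submodule.mem_span_singleton.1 hw
      by_cases hc : c = 0
      · subst hc
        simp only [zero_smul, add_zero] at hzM ⊢
        exact hT M hM t ht hzM
      · exfalso
        apply hxs M hM
        have h1 : t + c • x ∈ T ⊔ Subalgebra.toSubmodule M.toSubalgebra :=
          Submodule.mem_sup_right hzM
        have h2 : (t : F) ∈ T ⊔ Subalgebra.toSubmodule M.toSubalgebra :=
          Submodule.mem_sup_left ht
        have h3 : c • x ∈ T ⊔ Subalgebra.toSubmodule M.toSubalgebra := by
          have := Submodule.sub_mem _ h1 h2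
          simpa using this
        have := Submodule.smul_mem _ c⁻¹ h3
        rwa [inv_smul_smul₀ hc] at this
    have := hTmax T' hT'prop le_sup_left
    apply hxT
    rw [← this, hT']
    exact Submodule.mem_sup_right (Submodule.mem_span_singleton_self x)
  have hTdim : Module.finrank K T = n - ψ := by omega
  refine ⟨hTdim, hprim, ?_⟩
  -- φ = n - ψ
  have hφle : φ ≤ n - ψ := by
    obtain ⟨V, hVprim, hVdim⟩ := hφ.1
    -- V meets M₀ trivially
    have hVM : V ⊓ (Subalgebra.toSubmodule M₀.toSubalgebra) = ⊥ := by
      rw [eq_bot_iff]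
      intro a ha
      simp only [Submodule.mem_bot]
      by_contra ha0
      have := hVprim a ha.1 ha0
      have hle : IntermediateField.adjoin K {a} ≤ M₀ :=
        IntermediateField.adjoin_simple_le_iff.2 ha.2
      rw [this] at hle
      exact hM₀ne (top_le_iff.1 hle)
    have hfr := Submodule.finrank_sup_add_finrank_inf_eq V
      (Subalgebra.toSubmodule M₀.toSubalgebra)
    rw [hVM, finrank_bot, add_zero, hMdim, hM₀dim, hVdim] at hfr
    have : Module.finrank K ↥(V ⊔ Subalgebra.toSubmodule M₀.toSubalgebra) ≤ n :=
      hn ▸ Submodule.finrank_le _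
    omega
  have hφge : n - ψ ≤ φ := hTdim ▸ hφ.2 ⟨T, hprim, rfl⟩
  omega
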